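/- Let G be a finite simple graph in which every vertex has degree exactly 2, let {u1,v1} and {u2,v2} be edges of G with u1, v1, u2, v2 pairwise distinct and with neither {u1,u2} nor {v1,v2} an edge of G, and let G' be the result of the two-switch on these edges. Suppose u1 and u2 lie in the same connected component of G, and v1 and v2 lie in different connected components of the induced subgraph of G on V \ {u1, u2}. Then every vertex of G' has degree exactly 2, and any two vertices lying in the connected component of u1 in G lie in the same connected component of G'. -/

import Mathlib

open SimpleGraph Finset
open scoped Classical

section Aux
variable {V : Type*}

private lemma degree_induce_supp [Fintype V] (H : SimpleGraph V) (c : H.ConnectedComponent)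
    (v : c.supp) : (H.induce c.supp).degree v = H.degree (v : V) := by
  rw [← card_neighborSet_eq_degree, ← card_neighborSet_eq_degree]
  apply Fintype.card_congr
  refine Equiv.ofBijective (fun w => ⟨(w.1 : V), w.2⟩) ⟨?_, ?_⟩
  · intro a b h
    have := congrArg Subtype.val h
    ext
    exact this
  · rintro ⟨w, hw⟩
    have hwc : w ∈ c.supp := by
      rw [ConnectedComponent.mem_supp_iff]
      have hv := v.2
      rw [ConnectedComponent.mem_supp_iff] at hv
      rw [← hv]
      exact ConnectedComponent.sound hw.symm.reachable
    exact ⟨⟨⟨w, hwc⟩, by simpa using hw⟩, rfl⟩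

private lemma exists_odd_mate [Fintype V] (H : SimpleGraph V) (v : V) (h : Odd (H.degree v)) :
    ∃ w, w ≠ v ∧ H.Reachable v w ∧ Odd (H.degree w) := by
  by_contra hcon
  push_neg at hcon
  set c := H.connectedComponentMk v with hc
  have hv : v ∈ c.supp := by rw [ConnectedComponent.mem_supp_iff]
  have key := (H.induce c.supp).even_card_odd_degree_vertices
  have hA : (Finset.univ.filter fun w : c.supp => Odd ((H.induce c.supp).degree w))
      = {⟨v, hv⟩} := by
    ext w
    simp only [mem_filter, mem_univ, true_and, mem_singleton]
    rw [degree_induce_supp]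
    constructor
    · intro hw
      have hr : H.Reachable v (w : V) := by
        have h2 := w.2
        rw [ConnectedComponent.mem_supp_iff] at h2
        exact (ConnectedComponent.exact (h2.trans hc)).symm
      rcases eq_or_ne (w : V) v with h' | h'
      · exact Subtype.ext h'
      · exact absurd hw (hcon (w : V) h' hr)
    · rintro rfl
      exact h
  exact Nat.not_even_one (by rwa [hA, Finset.card_singleton] at key)

private lemma not_mem_support_of_degree_le_one [Fintype V] {H : SimpleGraph V} {u : V} :
    ∀ {a b : V} (p : H.Walk a b), p.IsPath → H.degree u ≤ 1 → u ≠ a → u ≠ b →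
      u ∉ p.support := by
  intro a b p
  induction p with
  | nil =>
    intro _ _ ha _
    simpa using ha
  | @cons a c b h q ih =>
    intro hp hu ha hb
    rw [SimpleGraph.Walk.support_cons, List.mem_cons]
    push_neg
    refine ⟨ha, ?_⟩
    rw [SimpleGraph.Walk.cons_isPath_iff] at hp
    rcases eq_or_ne u c with rfl | huc
    · cases q with
      | nil => exact absurd rfl hb
      | @cons _ d _ h' r =>
        exfalso
        have had : a ≠ d := by
          intro hne
          apply hp.2
          rw [SimpleGraph.Walk.support_cons, List.mem_cons]
          exact Or.inr (hne ▸ r.start_mem_support)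
        have h2 : 1 < H.degree u := by
          rw [← card_neighborFinset_eq_degree]
          rw [Finset.one_lt_card]
          exact ⟨a, by simpa [mem_neighborFinset] using h.symm,
                 d, by simpa [mem_neighborFinset] using h', had⟩
        omega
    · exact ih hp.1 hu huc hb

private lemma reachable_induce_of_walk {H G : SimpleGraph V} (hle : H ≤ G) (s : Set V) :
    ∀ {a b : V} (p : H.Walk a b), (∀ x ∈ p.support, x ∈ s) →
      ∀ (ha : a ∈ s) (hb : b ∈ s), (G.induce s).Reachable ⟨a, ha⟩ ⟨b, hb⟩ := by
  intro a b p
  induction p with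
  | nil => intro _ ha hb; rfl
  | @cons a c b h q ih =>
    intro hsup ha hb
    have hc : c ∈ s := hsup c (by simp)
    have hadj : (G.induce s).Adj ⟨a, ha⟩ ⟨c, hc⟩ := by
      simp only [comap_adj, Function.Embedding.coe_subtype]
      exact hle h
    exact hadj.reachable.trans (ih (fun x hx => hsup x (by simp [hx])) hc hb)

end Aux

/-- The result of the two-switch on the edges `{u1,v1}` and `{u2,v2}` of `G`:
these two edges are deleted and the edges `{u1,u2}` and `{v1,v2}` are inserted. -/
def twoSwitch {V : Type*} (G : SimpleGraph V) (u1 v1 u2 v2 : V) : SimpleGraph V :=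
  SimpleGraph.fromEdgeSet ((G.edgeSet \ {s(u1, v1), s(u2, v2)}) ∪ {s(u1, u2), s(v1, v2)})

section Aux2
variable {V : Type*}

private lemma twoSwitch_swap (G : SimpleGraph V) (u1 v1 u2 v2 : V) :
    twoSwitch G u1 v1 u2 v2 = twoSwitch G u2 v2 u1 v1 := by
  unfold twoSwitch
  rw [Set.pair_comm (s(u2, v2)) (s(u1, v1)), Sym2.eq_swap (a := u2) (b := u1),
    Sym2.eq_swap (a := v2) (b := v1)]

private lemma twoSwitch_symm2 (G : SimpleGraph V) (u1 v1 u2 v2 : V) :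
    twoSwitch G u1 v1 u2 v2 = twoSwitch G v1 u1 v2 u2 := by
  unfold twoSwitch
  rw [Sym2.eq_swap (a := v1) (b := u1), Sym2.eq_swap (a := v2) (b := u2),
    Set.pair_comm (s(v1, v2)) (s(u1, u2))]

private lemma twoSwitch_adj (G : SimpleGraph V) (u1 v1 u2 v2 a b : V) :
    (twoSwitch G u1 v1 u2 v2).Adj a b ↔
      ((G.Adj a b ∧ s(a, b) ≠ s(u1, v1) ∧ s(a, b) ≠ s(u2, v2)) ∨
        s(a, b) = s(u1, u2) ∨ s(a, b) = s(v1, v2)) ∧ a ≠ b := by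
  unfold twoSwitch
  rw [fromEdgeSet_adj]
  simp only [Set.mem_union, Set.mem_diff, Set.mem_insert_iff, Set.mem_singleton_iff,
    mem_edgeSet, not_or]

private lemma twoSwitch_degree_first [Fintype V] (G : SimpleGraph V) (u1 v1 u2 v2 : V)
    (hdeg : G.degree u1 = 2) (h1 : G.Adj u1 v1) (hd13 : u1 ≠ u2) (hd14 : u1 ≠ v2)
    (hnu : ¬ G.Adj u1 u2) : (twoSwitch G u1 v1 u2 v2).degree u1 = 2 := by
  have hd12 : u1 ≠ v1 := h1.ne
  have hN : (twoSwitch G u1 v1 u2 v2).neighborFinset u1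
      = insert u2 ((G.neighborFinset u1).erase v1) := by
    ext b
    rw [mem_neighborFinset, twoSwitch_adj, Finset.mem_insert, Finset.mem_erase,
      mem_neighborFinset]
    constructor
    · rintro ⟨(⟨hab, he1, _⟩ | he | he), hne⟩
      · refine Or.inr ⟨?_, hab⟩
        rintro rfl
        exact he1 rfl
      · rw [Sym2.eq_iff] at he
        rcases he with ⟨_, rfl⟩ | ⟨h', _⟩
        · exact Or.inl rfl
        · exact absurd h' hd13
      · rw [Sym2.eq_iff] at he
        rcases he with ⟨h', _⟩ | ⟨h', _⟩
        · exact absurd h' hd12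
        · exact absurd h' hd14
    · rintro (rfl | ⟨hbv, hab⟩)
      · exact ⟨Or.inr (Or.inl rfl), hd13⟩
      · refine ⟨Or.inl ⟨hab, ?_, ?_⟩, hab.ne⟩
        · intro he
          rw [Sym2.eq_iff] at he
          rcases he with (⟨_, h'⟩ | ⟨h', _⟩)
          · exact hbv h'
          · exact hd12 h'
        · intro he
          rw [Sym2.eq_iff] at he
          rcases he with (⟨h', _⟩ | ⟨h', _⟩)
          · exact hd13 h'
          · exact hd14 h'
  rw [← card_neighborFinset_eq_degree, hN,
    Finset.card_insert_of_notMem (by simp [mem_neighborFinset, hnu]),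
    Finset.card_erase_of_mem (by rwa [mem_neighborFinset]),
    card_neighborFinset_eq_degree, hdeg]

private lemma deleteEdges_degree_first [Fintype V] (G : SimpleGraph V) (u1 v1 u2 v2 : V)
    (hdeg : G.degree u1 = 2) (h1 : G.Adj u1 v1) (hd13 : u1 ≠ u2) (hd14 : u1 ≠ v2) :
    (G.deleteEdges {s(u1, v1), s(u2, v2)}).degree u1 = 1 := by
  have hd12 : u1 ≠ v1 := h1.ne
  have hN : (G.deleteEdges {s(u1, v1), s(u2, v2)}).neighborFinset u1
      = (G.neighborFinset u1).erase v1 := by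
    ext b
    rw [mem_neighborFinset, deleteEdges_adj, Finset.mem_erase, mem_neighborFinset]
    simp only [Set.mem_insert_iff, Set.mem_singleton_iff, not_or]
    constructor
    · rintro ⟨hab, he1, _⟩
      refine ⟨?_, hab⟩
      rintro rfl
      exact he1 rfl
    · rintro ⟨hbv, hab⟩
      refine ⟨hab, ?_, ?_⟩
      · intro he
        rw [Sym2.eq_iff] at he
        rcases he with (⟨_, h'⟩ | ⟨h', _⟩)
        · exact hbv h'
        · exact hd12 h'
      · intro he
        rw [Sym2.eq_iff] at he
        rcases he with (⟨h', _⟩ | ⟨h', _⟩)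
        · exact hd13 h'
        · exact hd14 h'
  rw [← card_neighborFinset_eq_degree, hN,
    Finset.card_erase_of_mem (by rwa [mem_neighborFinset]),
    card_neighborFinset_eq_degree, hdeg]

end Aux2

/-- a two-switch on edges of the same cycle whose endpoints `v1, v2` lie on
different paths from `u1` to `u2` keeps the vertices of the cycle in a single cycle. -/
theorem stmt_5 {V : Type*} [Fintype V] (G : SimpleGraph V)
    (hdeg : ∀ v : V, G.degree v = 2)
    (u1 v1 u2 v2 : V)
    (h1 : G.Adj u1 v1) (h2 : G.Adj u2 v2)
    (hd12 : u1 ≠ v1) (hd13 : u1 ≠ u2) (hd14 : u1 ≠ v2)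
    (hd23 : v1 ≠ u2) (hd24 : v1 ≠ v2) (hd34 : u2 ≠ v2)
    (hnu : ¬ G.Adj u1 u2) (hnv : ¬ G.Adj v1 v2)
    (hcomp : G.Reachable u1 u2)
    (hdiff : ∀ (hv1 : v1 ∈ ({u1, u2}ᶜ : Set V)) (hv2 : v2 ∈ ({u1, u2}ᶜ : Set V)),
      ¬ (G.induce ({u1, u2}ᶜ : Set V)).Reachable ⟨v1, hv1⟩ ⟨v2, hv2⟩) :
    (∀ v : V, (twoSwitch G u1 v1 u2 v2).degree v = 2) ∧
    ∀ x y : V, G.Reachable u1 x → G.Reachable u1 y →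
      (twoSwitch G u1 v1 u2 v2).Reachable x y := by
  classical
  set G' := twoSwitch G u1 v1 u2 v2 with hG'def
  set H := G.deleteEdges {s(u1, v1), s(u2, v2)} with hHdef
  -- Degrees of H
  have hHu1 : H.degree u1 = 1 := deleteEdges_degree_first G u1 v1 u2 v2 (hdeg u1) h1 hd13 hd14
  have hHu2 : H.degree u2 = 1 := by
    convert deleteEdges_degree_first G u2 v2 u1 v1 (hdeg u2) h2 hd13.symm hd23.symm using 2
    rw [hHdef, Set.pair_comm]
  have hHv1 : H.degree v1 = 1 := by
    convert deleteEdges_degree_first G v1 u1 v2 u2 (hdeg v1) h1.symm hd24 hd23 using 2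
    rw [hHdef, Sym2.eq_swap (a := u1) (b := v1), Sym2.eq_swap (a := u2) (b := v2)]
  have hHv2 : H.degree v2 = 1 := by
    convert deleteEdges_degree_first G v2 u2 v1 u1 (hdeg v2) h2.symm hd24.symm hd14.symm using 2
    rw [hHdef, Sym2.eq_swap (a := u1) (b := v1), Sym2.eq_swap (a := u2) (b := v2),
      Set.pair_comm]
  have hHgen : ∀ w : V, w ≠ u1 → w ≠ v1 → w ≠ u2 → w ≠ v2 → H.degree w = 2 := by
    intro w hw1 hw2 hw3 hw4
    have hN : H.neighborFinset w = G.neighborFinset w := by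
      ext b
      rw [mem_neighborFinset, mem_neighborFinset, hHdef, deleteEdges_adj]
      simp only [Set.mem_insert_iff, Set.mem_singleton_iff, not_or]
      refine ⟨fun h => h.1, fun h => ⟨h, ?_, ?_⟩⟩
      · intro he
        rw [Sym2.eq_iff] at he
        rcases he with (⟨h', _⟩ | ⟨h', _⟩)
        · exact hw1 h'
        · exact hw2 h'
      · intro he
        rw [Sym2.eq_iff] at he
        rcases he with (⟨h', _⟩ | ⟨h', _⟩)
        · exact hw3 h'
        · exact hw4 h'
    rw [← card_neighborFinset_eq_degree, hN, card_neighborFinset_eq_degree]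
    exact hdeg w
  have hodd : ∀ w : V, Odd (H.degree w) → w = u1 ∨ w = v1 ∨ w = u2 ∨ w = v2 := by
    intro w hw
    by_contra hcon
    push_neg at hcon
    rw [hHgen w hcon.1 hcon.2.1 hcon.2.2.1 hcon.2.2.2] at hw
    obtain ⟨k, hk⟩ := hw
    omega
  have hHle : H ≤ G := by
    intro a b hab
    rw [hHdef, deleteEdges_adj] at hab
    exact hab.1
  -- v1 and v2 are not reachable in H
  have hnr : ¬ H.Reachable v1 v2 := by
    rintro ⟨p⟩
    have hp := p.toPath.2
    have h1' : u1 ∉ (p.toPath : H.Walk v1 v2).support :=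
      not_mem_support_of_degree_le_one _ hp (le_of_eq (by convert hHu1)) hd12 hd14
    have h2' : u2 ∉ (p.toPath : H.Walk v1 v2).support :=
      not_mem_support_of_degree_le_one _ hp (le_of_eq (by convert hHu2)) hd23.symm hd34
    have hmem : ∀ x ∈ (p.toPath : H.Walk v1 v2).support, x ∈ ({u1, u2}ᶜ : Set V) := by
      intro x hx
      simp only [Set.mem_compl_iff, Set.mem_insert_iff, Set.mem_singleton_iff, not_or]
      exact ⟨fun h => h1' (h ▸ hx), fun h => h2' (h ▸ hx)⟩
    have hv1m : v1 ∈ ({u1, u2}ᶜ : Set V) := hmem _ (Walk.start_mem_support _)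
    have hv2m : v2 ∈ ({u1, u2}ᶜ : Set V) := hmem _ (Walk.end_mem_support _)
    exact hdiff hv1m hv2m (reachable_induce_of_walk hHle _ _ hmem hv1m hv2m)
  -- mates
  have hmate : ∀ x : V, x = v1 ∨ x = v2 → H.degree x = 1 →
      (H.Reachable x u1 ∨ H.Reachable x u2) := by
    intro x hx hxd
    obtain ⟨w, hwne, hwr, hwodd⟩ := exists_odd_mate H x (by convert (odd_one : Odd 1); convert hxd)
    rcases hodd w (by convert hwodd) with rfl | rfl | rfl | rfl
    · exact Or.inl hwr
    · -- w = v1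
      rcases hx with rfl | rfl
      · exact absurd rfl hwne
      · exact absurd hwr.symm hnr
    · exact Or.inr hwr
    · rcases hx with rfl | rfl
      · exact absurd hwr hnr
      · exact absurd rfl hwne
  have hm1 := hmate v1 (Or.inl rfl) hHv1
  have hm2 := hmate v2 (Or.inr rfl) hHv2
  -- H ≤ G'
  have hHle' : H ≤ G' := by
    intro a b hab
    have hab' := hab
    rw [hHdef, deleteEdges_adj] at hab'
    simp only [Set.mem_insert_iff, Set.mem_singleton_iff, not_or] at hab'
    rw [hG'def, twoSwitch_adj]
    exact ⟨Or.inl ⟨hab'.1, hab'.2.1, hab'.2.2⟩, hab'.1.ne⟩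
  have e_uu : G'.Adj u1 u2 := by
    rw [hG'def, twoSwitch_adj]
    exact ⟨Or.inr (Or.inl rfl), hd13⟩
  have e_vv : G'.Adj v1 v2 := by
    rw [hG'def, twoSwitch_adj]
    exact ⟨Or.inr (Or.inr rfl), hd24⟩
  -- key reachabilities
  have K1 : G'.Reachable u1 v1 ∧ G'.Reachable u2 v2 := by
    rcases hm1 with r1 | r1 <;> rcases hm2 with r2 | r2
    · exact absurd ((r1.trans r2.symm) : H.Reachable v1 v2) hnr
    · exact ⟨(r1.mono hHle').symm, (r2.mono hHle').symm⟩
    · exact ⟨e_uu.reachable.trans (r1.mono hHle').symm,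
        e_uu.symm.reachable.trans (r2.mono hHle').symm⟩
    · exact absurd ((r1.trans r2.symm) : H.Reachable v1 v2) hnr
  -- transfer of reachability from G to G'
  have hadjR : ∀ a b : V, G.Adj a b → G'.Reachable a b := by
    intro a b hab
    by_cases he1 : s(a, b) = s(u1, v1)
    · rw [Sym2.eq_iff] at he1
      rcases he1 with ⟨rfl, rfl⟩ | ⟨rfl, rfl⟩
      · exact K1.1
      · exact K1.1.symm
    · by_cases he2 : s(a, b) = s(u2, v2)
      · rw [Sym2.eq_iff] at he2
        rcases he2 with ⟨rfl, rfl⟩ | ⟨rfl, rfl⟩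
        · exact K1.2
        · exact K1.2.symm
      · refine (Adj.reachable ?_)
        apply hHle'
        rw [hHdef, deleteEdges_adj]
        simp only [Set.mem_insert_iff, Set.mem_singleton_iff, not_or]
        exact ⟨hab, he1, he2⟩
  have htrans : ∀ a b : V, G.Reachable a b → G'.Reachable a b := by
    rintro a b ⟨p⟩
    induction p with
    | nil => rfl
    | cons h q ih => exact (hadjR _ _ h).trans ih
  constructor
  · -- degrees
    intro v
    rcases eq_or_ne v u1 with rfl | hv1'
    · exact twoSwitch_degree_first G v v1 u2 v2 (hdeg v) h1 hd13 hd14 hnu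
    rcases eq_or_ne v u2 with rfl | hv2'
    · rw [hG'def, twoSwitch_swap]
      exact twoSwitch_degree_first G v v2 u1 v1 (hdeg v) h2 hd13.symm hd23.symm
        (fun h => hnu h.symm)
    rcases eq_or_ne v v1 with rfl | hv3'
    · rw [hG'def, twoSwitch_symm2]
      exact twoSwitch_degree_first G v u1 v2 u2 (hdeg v) h1.symm hd24 hd23 hnv
    rcases eq_or_ne v v2 with rfl | hv4'
    · rw [hG'def, twoSwitch_symm2, twoSwitch_swap]
      exact twoSwitch_degree_first G v u2 v1 u1 (hdeg v) h2.symm hd24.symm hd14.symm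
        (fun h => hnv h.symm)
    · have hN : (twoSwitch G u1 v1 u2 v2).neighborFinset v = G.neighborFinset v := by
        ext b
        rw [mem_neighborFinset, mem_neighborFinset, twoSwitch_adj]
        constructor
        · rintro ⟨(⟨hab, _, _⟩ | he | he), hne⟩
          · exact hab
          · rw [Sym2.eq_iff] at he
            rcases he with ⟨h', _⟩ | ⟨h', _⟩
            · exact absurd h' hv1'
            · exact absurd h' hv2'
          · rw [Sym2.eq_iff] at he
            rcases he with ⟨h', _⟩ | ⟨h', _⟩
            · exact absurd h' hv3'
            · exact absurd h' hv4'
        · intro hab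
          refine ⟨Or.inl ⟨hab, ?_, ?_⟩, hab.ne⟩
          · intro he
            rw [Sym2.eq_iff] at he
            rcases he with (⟨h', _⟩ | ⟨h', _⟩)
            · exact hv1' h'
            · exact hv3' h'
          · intro he
            rw [Sym2.eq_iff] at he
            rcases he with (⟨h', _⟩ | ⟨h', _⟩)
            · exact hv2' h'
            · exact hv4' h'
      rw [hG'def, ← card_neighborFinset_eq_degree, hN, card_neighborFinset_eq_degree]
      exact hdeg v
  · intro x y hx hy
    exact (htrans u1 x hx).symm.trans (htrans u1 y hy)
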